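/- arXiv:1205.6275 — 2 statements merged into one kernel-verified Lean document; each statement's English description precedes it below -/
import Mathlib

section
/- If Y = UZ where U is uniform on (0,1) and Z has distribution function G on (0,∞), with U and Z independent, then Y has an absolutely continuous distribution with density f(y) = ∫_{[y,∞)} z^{-1} dG(z) for y > 0. -/
open MeasureTheory ProbabilityTheory Set
open scoped ENNReal

/-- If `Y = U * Z` with `U` uniform on `(0,1)`, `Z ~ G` supported on `(0,∞)`, and `U, Z`
independent, then `Y` has density `f(y) = ∫_{[y,∞)} z⁻¹ dG(z)` on `(0,∞)`. -/
theorem mult_censoring_density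
    {Ω : Type*} [MeasurableSpace Ω] (P : Measure Ω) [IsProbabilityMeasure P]
    (U Z : Ω → ℝ) (hU : Measurable U) (hZ : Measurable Z)
    (hUunif : Measure.map U P = volume.restrict (Set.Ioo (0:ℝ) 1))
    (hZpos : Measure.map Z P (Set.Iic 0) = 0)
    (hindep : IndepFun U Z P) :
    Measure.map (fun ω => U ω * Z ω) P
      = (volume.restrict (Set.Ioi (0:ℝ))).withDensity
          (fun y => ENNReal.ofReal (∫ z in Set.Ici y, z⁻¹ ∂(Measure.map Z P))) := by
  set G := Measure.map Z P with hGdef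
  have hGprob : IsProbabilityMeasure G := Measure.isProbabilityMeasure_map hZ.aemeasurable
  have hGpos : ∀ᵐ z ∂G, 0 < z := by
    rw [ae_iff]
    have hset : {z : ℝ | ¬ 0 < z} = Iic 0 := by ext z; simp [not_lt]
    rw [hset]; exact hZpos
  set g : ℝ → ℝ≥0∞ := fun y => ∫⁻ z in Ioi y, ENNReal.ofReal z⁻¹ ∂G with hgdef
  -- Step 1: push forward via the joint distribution
  have hjoint : Measure.map (fun ω => (U ω, Z ω)) P
      = (volume.restrict (Ioo (0:ℝ) 1)).prod G := by
    rw [← hUunif]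
    exact (indepFun_iff_map_prod_eq_prod_map_map hU.aemeasurable hZ.aemeasurable).mp hindep
  have hmapY : Measure.map (fun ω => U ω * Z ω) P
      = Measure.map (fun p : ℝ × ℝ => p.1 * p.2) ((volume.restrict (Ioo (0:ℝ) 1)).prod G) := by
    rw [← hjoint, Measure.map_map (g := fun p : ℝ × ℝ => p.1 * p.2) (measurable_fst.mul measurable_snd) (hU.prodMk hZ)]
    rfl
  -- Step 2: intermediate density `g`
  have hmain : Measure.map (fun p : ℝ × ℝ => p.1 * p.2) ((volume.restrict (Ioo (0:ℝ) 1)).prod G)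
      = (volume.restrict (Ioi (0:ℝ))).withDensity g := by
    ext s hs
    rw [Measure.map_apply (f := fun p : ℝ × ℝ => p.1 * p.2) (measurable_fst.mul measurable_snd) hs,
        Measure.prod_apply_symm (hs.preimage (f := fun p : ℝ × ℝ => p.1 * p.2) (measurable_fst.mul measurable_snd))]
    set T : Set (ℝ × ℝ) := {q : ℝ × ℝ | q.2 ∈ s ∧ 0 < q.2 ∧ q.2 < q.1} with hTdef
    have hTmeas : MeasurableSet T := by
      have h1 : MeasurableSet {q : ℝ × ℝ | q.2 ∈ s} := hs.preimage measurable_snd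
      have h2 : MeasurableSet {q : ℝ × ℝ | 0 < q.2} :=
        measurableSet_lt measurable_const measurable_snd
      have h3 : MeasurableSet {q : ℝ × ℝ | q.2 < q.1} :=
        measurableSet_lt measurable_snd measurable_fst
      have : T = {q : ℝ × ℝ | q.2 ∈ s} ∩ ({q : ℝ × ℝ | 0 < q.2} ∩ {q : ℝ × ℝ | q.2 < q.1}) := by
        ext q; simp [hTdef, and_assoc]
      rw [this]; exact h1.inter (h2.inter h3)
    set F : ℝ → ℝ → ℝ≥0∞ := fun z y => ENNReal.ofReal z⁻¹ * T.indicator 1 (z, y) with hFdef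
    have hFmeas : Measurable (Function.uncurry F) := by
      have : Function.uncurry F = fun p : ℝ × ℝ => ENNReal.ofReal p.1⁻¹ * T.indicator 1 p := rfl
      rw [this]
      exact (measurable_fst.inv.ennreal_ofReal).mul (measurable_one.indicator hTmeas)
    have step1 : ∫⁻ z, (volume.restrict (Ioo (0:ℝ) 1))
          ((fun u => (u, z)) ⁻¹' ((fun p : ℝ × ℝ => p.1 * p.2) ⁻¹' s)) ∂G
        = ∫⁻ z, ∫⁻ y, F z y ∂volume ∂G := by
      refine lintegral_congr_ae (hGpos.mono fun z hz => ?_)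
      dsimp only
      have h1 : (fun u => (u, z)) ⁻¹' ((fun p : ℝ × ℝ => p.1 * p.2) ⁻¹' s)
          = {u : ℝ | u * z ∈ s} := rfl
      have h2 : {u : ℝ | u * z ∈ s} ∩ Ioo 0 1 = (fun u => u * z) ⁻¹' (s ∩ Ioo 0 z) := by
        ext u
        simp only [mem_inter_iff, mem_setOf_eq, mem_Ioo, mem_preimage]
        constructor
        · rintro ⟨ha, hb, hc⟩
          exact ⟨ha, mul_pos hb hz, by nlinarith⟩
        · rintro ⟨ha, hb, hc⟩
          exact ⟨ha, by nlinarith, by nlinarith⟩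
      rw [h1, Measure.restrict_apply' measurableSet_Ioo, h2,
          Real.volume_preimage_mul_right (ne_of_gt hz),
          abs_of_pos (inv_pos.mpr hz)]
      have hmeasInd : Measurable fun y => T.indicator (1 : ℝ × ℝ → ℝ≥0∞) (z, y) :=
        (measurable_one.indicator hTmeas).comp (measurable_prodMk_left)
      have hconst : (∫⁻ y, F z y ∂volume)
          = ENNReal.ofReal z⁻¹ * ∫⁻ y, T.indicator 1 (z, y) ∂volume :=
        lintegral_const_mul _ hmeasInd
      rw [hconst]
      congr 1
      have hind : (fun y => T.indicator (1 : ℝ × ℝ → ℝ≥0∞) (z, y))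
          = (s ∩ Ioo 0 z).indicator 1 := by
        ext y
        by_cases hy : y ∈ s ∩ Ioo 0 z
        · obtain ⟨hy1, hy2, hy3⟩ := hy
          rw [indicator_of_mem (show (z, y) ∈ T from ⟨hy1, hy2, hy3⟩),
              indicator_of_mem (show y ∈ s ∩ Ioo 0 z from ⟨hy1, hy2, hy3⟩)]
          rfl
        · have hnot : (z, y) ∉ T := fun h => hy ⟨h.1, h.2.1, h.2.2⟩
          rw [indicator_of_notMem hnot, indicator_of_notMem hy]
      rw [hind, lintegral_indicator_one (hs.inter measurableSet_Ioo)]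
    rw [step1, lintegral_lintegral_swap hFmeas.aemeasurable]
    have inner : ∀ y : ℝ, (∫⁻ z, F z y ∂G) = (s ∩ Ioi 0).indicator g y := by
      intro y
      by_cases hy : y ∈ s ∩ Ioi 0
      · rw [indicator_of_mem hy]
        obtain ⟨hys, hy0⟩ := hy
        have hFeq : ∀ z : ℝ, F z y
            = (Ioi y).indicator (fun z => ENNReal.ofReal z⁻¹) z := by
          intro z
          by_cases hz : y < z
          · rw [hFdef]
            simp only
            rw [indicator_of_mem (show (z, y) ∈ T from ⟨hys, hy0, hz⟩),
                indicator_of_mem (show z ∈ Ioi y from hz)]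
            simp
          · have hnot : (z, y) ∉ T := fun h => hz h.2.2
            rw [hFdef]
            simp only
            rw [indicator_of_notMem hnot, indicator_of_notMem (show z ∉ Ioi y from hz)]
            simp
        simp_rw [hFeq]
        exact lintegral_indicator measurableSet_Ioi _
      · rw [indicator_of_notMem hy]
        have hF0 : ∀ z : ℝ, F z y = 0 := by
          intro z
          have hnot : (z, y) ∉ T := fun h => hy ⟨h.1, h.2.1⟩
          rw [hFdef]
          simp only
          rw [indicator_of_notMem hnot]
          simp
        simp [hF0]
    simp_rw [inner]
    rw [lintegral_indicator (hs.inter measurableSet_Ioi),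
        withDensity_apply g hs, Measure.restrict_restrict hs]
  rw [hmapY, hmain]
  refine withDensity_congr_ae ?_
  have hcnt : Set.Countable {y : ℝ | G {y} ≠ 0} := by
    have hc := Measure.countable_meas_pos_of_disjoint_iUnion (μ := G)
      (As := fun y : ℝ => ({y} : Set ℝ)) (fun y => measurableSet_singleton y)
      (fun y z hyz => by simpa [Function.onFun] using disjoint_singleton.mpr hyz)
    have : {y : ℝ | G {y} ≠ 0} = {y : ℝ | 0 < G ({y} : Set ℝ)} := by
      ext y; simp [pos_iff_ne_zero]
    rw [this]; exact hc
  have hnull : ∀ᵐ y ∂(volume.restrict (Ioi (0:ℝ))), G {y} = 0 := by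
    refine ae_restrict_of_ae ?_
    rw [ae_iff]
    exact measure_mono_null (fun y hy => hy) (hcnt.measure_zero _)
  filter_upwards [hnull, ae_restrict_mem measurableSet_Ioi] with y hy hy0
  have hint : IntegrableOn (fun z : ℝ => z⁻¹) (Ici y) G := by
    refine Measure.integrableOn_of_bounded (M := y⁻¹) (measure_ne_top G _)
      measurable_inv.aestronglyMeasurable ?_
    filter_upwards [ae_restrict_mem measurableSet_Ici] with z hz
    rw [Real.norm_eq_abs, abs_of_pos (inv_pos.mpr (lt_of_lt_of_le hy0 hz))]
    exact inv_anti₀ hy0 hz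
  have hnn : 0 ≤ᵐ[G.restrict (Ici y)] fun z : ℝ => z⁻¹ := by
    filter_upwards [ae_restrict_mem measurableSet_Ici] with z hz
    exact inv_nonneg.mpr (le_trans hy0.le hz)
  rw [hgdef]
  rw [ofReal_integral_eq_lintegral_ofReal hint hnn]
  exact setLIntegral_congr (Ioi_ae_eq_Ici' hy)
end

section
/- Let t₁ < ⋯ < t_k be positive reals, δ_i ∈ {0,1} with δ_i = 1 exactly for m indices, and suppose δ₁ = ⋯ = δ_{r₀−1} = 0 for some index r₀. Define D = {(a_{r₀},…,a_k) : a_i ≥ 0, Σ a_i = 1, a_k ≥ 1/k} and the map φ = (φ_{r₀},…,φ_k) with φ_i(a) = (1/k)[δ_i + (a_i/t_i) Σ_{j=1}^{i} (1−δ_j)/(Σ_{q=max(j,r₀)}^{k} a_q/t_q)]. Then φ is a continuous map from D into D, and hence has a fixed point in D. -/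
open Finset

/-- The simplex-like domain `D` of the fixed-point argument. -/
def Dset (k r₀ : ℕ) : Set (ℕ → ℝ) :=
  {a | (∀ i ∈ Finset.Icc r₀ k, 0 ≤ a i) ∧
    (∑ i ∈ Finset.Icc r₀ k, a i) = 1 ∧ (1 : ℝ) / k ≤ a k}

/-- The fixed-point map `φ` of the score-equation existence proof. -/
noncomputable def phiMap (k r₀ : ℕ) (t δ : ℕ → ℝ) : (ℕ → ℝ) → (ℕ → ℝ) :=
  fun a i => (1 / (k : ℝ)) * (δ i + (a i / t i) *
    ∑ j ∈ Finset.Icc 1 i,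
      (1 - δ j) / (∑ q ∈ Finset.Icc (max j r₀) k, a q / t q))

namespace PhiFix

variable (k r₀ : ℕ) (t δ : ℕ → ℝ)

noncomputable def Sf (a : ℕ → ℝ) (j : ℕ) : ℝ := ∑ q ∈ Icc (max j r₀) k, a q / t q

noncomputable def Cf (a : ℕ → ℝ) (i : ℕ) : ℝ := ∑ j ∈ Icc 1 i, (1 - δ j) / Sf k r₀ t a j

noncomputable def Ff (a : ℕ → ℝ) : ℝ :=
  ∑ p ∈ Icc r₀ k, δ p * Real.log (a p)
    + ∑ j ∈ Icc 1 k, (1 - δ j) * Real.log (Sf k r₀ t a j)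

open Classical in
noncomputable def wf (i : ℕ) : ℝ := if δ i = 0 ∧ i ≠ k then 0 else 1

def Kset (ε : ℝ) : Set (ℕ → ℝ) :=
  {a | (∀ q, q ∉ Icc r₀ k → a q = 0) ∧ (∀ q ∈ Icc r₀ k, ε * wf k δ q ≤ a q) ∧
    ∑ q ∈ Icc r₀ k, a q = 1}

lemma wf_nonneg (i : ℕ) : 0 ≤ wf k δ i := by unfold wf; split <;> norm_num

lemma wf_le_one (i : ℕ) : wf k δ i ≤ 1 := by unfold wf; split <;> norm_num

lemma wf_k : wf k δ k = 1 := by simp [wf]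

lemma wf_of_delta {i : ℕ} (hd : δ i ≠ 0) : wf k δ i = 1 := by simp [wf, hd]

lemma wf_eq_one {i : ℕ} (hw : wf k δ i ≠ 0) : wf k δ i = 1 := by
  by_cases h : δ i = 0 ∧ i ≠ k
  · exact absurd (by simp [wf, h]) hw
  · simp [wf, h]

lemma phi_eq (a : ℕ → ℝ) (i : ℕ) :
    phiMap k r₀ t δ a i = 1 / (k : ℝ) * (δ i + a i / t i * Cf k r₀ t δ a i) := rfl

lemma sum_swap (f : ℕ → ℕ → ℝ) :
    ∑ i ∈ Icc r₀ k, ∑ j ∈ Icc 1 i, f i j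
      = ∑ j ∈ Icc 1 k, ∑ i ∈ Icc (max j r₀) k, f i j := by
  have h1 : ∀ i ∈ Icc r₀ k, ∑ j ∈ Icc 1 i, f i j
      = ∑ j ∈ Icc 1 k, if j ≤ i then f i j else 0 := by
    intro i hi
    rw [mem_Icc] at hi
    rw [← Finset.sum_filter]
    apply Finset.sum_congr _ fun _ _ => rfl
    ext j; simp only [mem_Icc, mem_filter]; omega
  rw [Finset.sum_congr rfl h1, Finset.sum_comm]
  refine Finset.sum_congr rfl fun j hj => ?_
  rw [← Finset.sum_filter]
  apply Finset.sum_congr _ fun _ _ => rfl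
  ext i; simp only [mem_Icc, mem_filter]; omega

variable {k r₀ t δ}

lemma Sf_nonneg (hr₀ : 1 ≤ r₀) (ht : ∀ i ∈ Icc 1 k, 0 < t i) {a : ℕ → ℝ}
    (ha : ∀ q ∈ Icc r₀ k, 0 ≤ a q) (j : ℕ) : 0 ≤ Sf k r₀ t a j := by
  apply Finset.sum_nonneg
  intro q hq
  rw [mem_Icc] at hq
  have h1 : 0 ≤ a q := ha q (mem_Icc.mpr ⟨le_trans (le_max_right _ _) hq.1, hq.2⟩)
  have h2 : 0 < t q := ht q (mem_Icc.mpr ⟨by omega, hq.2⟩)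
  exact div_nonneg h1 h2.le

lemma Sf_pos (hr₀ : 1 ≤ r₀) (hrk : r₀ ≤ k) (ht : ∀ i ∈ Icc 1 k, 0 < t i) {a : ℕ → ℝ}
    (ha : ∀ q ∈ Icc r₀ k, 0 ≤ a q) (hak : 0 < a k) {j : ℕ} (hj : j ≤ k) :
    0 < Sf k r₀ t a j := by
  have hmem : k ∈ Icc (max j r₀) k := mem_Icc.mpr ⟨by omega, le_refl k⟩
  have htk : 0 < t k := ht k (mem_Icc.mpr ⟨by omega, le_refl k⟩)
  have h : a k / t k ≤ Sf k r₀ t a j := by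
    apply Finset.single_le_sum (f := fun q => a q / t q) _ hmem
    intro q hq
    rw [mem_Icc] at hq
    exact div_nonneg (ha q (mem_Icc.mpr ⟨by omega, hq.2⟩)) (ht q (mem_Icc.mpr ⟨by omega, hq.2⟩)).le
  exact lt_of_lt_of_le (div_pos hak htk) h

lemma Cf_nonneg (hr₀ : 1 ≤ r₀) (ht : ∀ i ∈ Icc 1 k, 0 < t i)
    (hδ01 : ∀ i, δ i = 0 ∨ δ i = 1) {a : ℕ → ℝ}
    (ha : ∀ q ∈ Icc r₀ k, 0 ≤ a q) (i : ℕ) : 0 ≤ Cf k r₀ t δ a i := by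
  apply Finset.sum_nonneg
  intro j _
  apply div_nonneg _ (Sf_nonneg hr₀ ht ha j)
  rcases hδ01 j with h | h <;> norm_num [h]

lemma sum_delta_Icc (hr₀ : 1 ≤ r₀) (hrk : r₀ ≤ k) {m : ℕ}
    (hδm : ∑ i ∈ Icc 1 k, δ i = (m : ℝ))
    (hδr : ∀ i, 1 ≤ i → i < r₀ → δ i = 0) :
    ∑ i ∈ Icc r₀ k, δ i = (m : ℝ) := by
  have h0 : ∑ i ∈ Ioc 0 (r₀ - 1), δ i = 0 :=
    Finset.sum_eq_zero fun i hi => by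
      rw [mem_Ioc] at hi; exact hδr i hi.1 (by omega)
  have key := Finset.sum_Ioc_consecutive δ (Nat.zero_le (r₀ - 1)) (show r₀ - 1 ≤ k by omega)
  have e1 : Icc r₀ k = Ioc (r₀ - 1) k := by
    rw [← Finset.Icc_add_one_left_eq_Ioc]; congr 1; omega
  have e2 : Icc 1 k = Ioc 0 k := Finset.Icc_add_one_left_eq_Ioc 0 k
  rw [e2] at hδm
  rw [e1, ← hδm, ← key, h0, zero_add]

lemma sum_one_sub_delta (hr₀ : 1 ≤ r₀) (hrk : r₀ ≤ k) {m : ℕ}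
    (hδm : ∑ i ∈ Icc 1 k, δ i = (m : ℝ)) :
    ∑ j ∈ Icc 1 k, (1 - δ j) = (k : ℝ) - (m : ℝ) := by
  have hc : (Icc 1 k).card = k := by rw [Nat.card_Icc]; omega
  rw [Finset.sum_sub_distrib, hδm, Finset.sum_const, hc, nsmul_eq_mul, mul_one]

lemma sum_weighted {a : ℕ → ℝ} (hS : ∀ j ∈ Icc 1 k, Sf k r₀ t a j ≠ 0) :
    ∑ i ∈ Icc r₀ k, a i / t i * Cf k r₀ t δ a i = ∑ j ∈ Icc 1 k, (1 - δ j) := by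
  have h1 : ∀ i ∈ Icc r₀ k, a i / t i * Cf k r₀ t δ a i
      = ∑ j ∈ Icc 1 i, a i / t i * ((1 - δ j) / Sf k r₀ t a j) := fun i _ =>
    Finset.mul_sum _ _ _
  rw [Finset.sum_congr rfl h1, sum_swap]
  refine Finset.sum_congr rfl fun j hj => ?_
  rw [← Finset.sum_mul]
  have h2 : ∑ i ∈ Icc (max j r₀) k, a i / t i = Sf k r₀ t a j := rfl
  rw [h2, mul_comm, div_mul_cancel₀ _ (hS j hj)]

lemma phi_k_ge (hr₀ : 1 ≤ r₀) (hrk : r₀ ≤ k) (ht : ∀ i ∈ Icc 1 k, 0 < t i)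
    (hδ01 : ∀ i, δ i = 0 ∨ δ i = 1) {a : ℕ → ℝ}
    (ha : ∀ q ∈ Icc r₀ k, 0 ≤ a q) (hak : 0 < a k) :
    1 / (k : ℝ) ≤ phiMap k r₀ t δ a k := by
  have hk1 : 1 ≤ k := hr₀.trans hrk
  have htk : 0 < t k := ht k (mem_Icc.mpr ⟨hk1, le_refl k⟩)
  have hq : (0 : ℝ) < a k / t k := div_pos hak htk
  have hSk : Sf k r₀ t a k = a k / t k := by
    unfold Sf; rw [max_eq_left hrk, Finset.Icc_self, Finset.sum_singleton]
  have hCk : (1 - δ k) / (a k / t k) ≤ Cf k r₀ t δ a k := by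
    have h := Finset.single_le_sum (f := fun j => (1 - δ j) / Sf k r₀ t a j)
      (fun j _ => div_nonneg (by rcases hδ01 j with h | h <;> norm_num [h])
        (Sf_nonneg hr₀ ht ha j)) (mem_Icc.mpr ⟨hk1, le_refl k⟩)
    have h' : (1 - δ k) / Sf k r₀ t a k ≤ Cf k r₀ t δ a k := h
    rwa [hSk] at h'
  have hone : a k / t k * ((1 - δ k) / (a k / t k)) = 1 - δ k := by
    rw [mul_comm, div_mul_cancel₀ _ hq.ne']
  have step : (1 : ℝ) ≤ δ k + a k / t k * Cf k r₀ t δ a k := by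
    have h := mul_le_mul_of_nonneg_left hCk hq.le
    rw [hone] at h
    linarith
  rw [phi_eq]
  have h1k : (0 : ℝ) < 1 / (k : ℝ) := by
    have : (0 : ℝ) < (k : ℝ) := by exact_mod_cast Nat.pos_of_ne_zero (by omega)
    positivity
  calc (1 : ℝ) / k = 1 / k * 1 := (mul_one _).symm
    _ ≤ 1 / k * (δ k + a k / t k * Cf k r₀ t δ a k) :=
        mul_le_mul_of_nonneg_left step h1k.le

lemma sum_phi (hr₀ : 1 ≤ r₀) (hrk : r₀ ≤ k) (ht : ∀ i ∈ Icc 1 k, 0 < t i) {m : ℕ}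
    (hδm : ∑ i ∈ Icc 1 k, δ i = (m : ℝ))
    (hδr : ∀ i, 1 ≤ i → i < r₀ → δ i = 0) {a : ℕ → ℝ}
    (ha : ∀ q ∈ Icc r₀ k, 0 ≤ a q) (hak : 0 < a k) :
    ∑ i ∈ Icc r₀ k, phiMap k r₀ t δ a i = 1 := by
  have hS : ∀ j ∈ Icc 1 k, Sf k r₀ t a j ≠ 0 := fun j hj =>
    (Sf_pos hr₀ hrk ht ha hak (mem_Icc.mp hj).2).ne'
  have hk0 : (k : ℝ) ≠ 0 := by
    have : 1 ≤ k := hr₀.trans hrk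
    exact_mod_cast (by omega : k ≠ 0)
  rw [Finset.sum_congr rfl fun i _ => phi_eq k r₀ t δ a i, ← Finset.mul_sum,
    Finset.sum_add_distrib, sum_delta_Icc hr₀ hrk hδm hδr, sum_weighted hS,
    sum_one_sub_delta hr₀ hrk hδm,
    show (m : ℝ) + ((k : ℝ) - (m : ℝ)) = (k : ℝ) by ring, one_div,
    inv_mul_cancel₀ hk0]

lemma mapsTo (hr₀ : 1 ≤ r₀) (hrk : r₀ ≤ k) (ht : ∀ i ∈ Icc 1 k, 0 < t i)
    (hδ01 : ∀ i, δ i = 0 ∨ δ i = 1) {m : ℕ}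
    (hδm : ∑ i ∈ Icc 1 k, δ i = (m : ℝ))
    (hδr : ∀ i, 1 ≤ i → i < r₀ → δ i = 0) :
    Set.MapsTo (phiMap k r₀ t δ) (Dset k r₀) (Dset k r₀) := by
  intro a haD
  obtain ⟨ha0, ha1, hak⟩ := haD
  have hk1 : 1 ≤ k := hr₀.trans hrk
  have hkR : (0 : ℝ) < (k : ℝ) := by exact_mod_cast Nat.pos_of_ne_zero (by omega)
  have hakpos : 0 < a k := lt_of_lt_of_le (by positivity) hak
  refine ⟨?_, ?_, ?_⟩
  · intro i hi
    rw [phi_eq]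
    have h1 : 0 ≤ δ i := by rcases hδ01 i with h | h <;> norm_num [h]
    have h2 : 0 ≤ a i / t i := by
      rw [mem_Icc] at hi
      exact div_nonneg (ha0 i (mem_Icc.mpr hi)) (ht i (mem_Icc.mpr ⟨by omega, hi.2⟩)).le
    have h3 := Cf_nonneg hr₀ ht hδ01 ha0 i
    have h4 : (0:ℝ) ≤ 1 / (k:ℝ) := by positivity
    exact mul_nonneg h4 (by nlinarith)
  · exact sum_phi hr₀ hrk ht hδm hδr ha0 hakpos
  · exact phi_k_ge hr₀ hrk ht hδ01 ha0 hakpos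

lemma contOn (hr₀ : 1 ≤ r₀) (hrk : r₀ ≤ k) (ht : ∀ i ∈ Icc 1 k, 0 < t i) :
    ContinuousOn (phiMap k r₀ t δ) (Dset k r₀) := by
  have hk1 : 1 ≤ k := hr₀.trans hrk
  have hkR : (0 : ℝ) < (k : ℝ) := by exact_mod_cast Nat.pos_of_ne_zero (by omega)
  rw [continuousOn_pi]
  intro i
  simp only [phiMap]
  apply ContinuousOn.mul continuousOn_const
  apply ContinuousOn.add continuousOn_const
  apply ContinuousOn.mul (((continuous_apply i).continuousOn).div_const _)
  apply continuousOn_finset_sum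
  intro j _
  by_cases hjk : j ≤ k
  · apply ContinuousOn.div continuousOn_const
    · exact continuousOn_finset_sum _ fun q _ => ((continuous_apply q).continuousOn).div_const _
    · intro a haD
      obtain ⟨ha0, ha1, hak⟩ := haD
      have hakpos : 0 < a k := lt_of_lt_of_le (by positivity) hak
      exact (Sf_pos hr₀ hrk ht ha0 hakpos hjk).ne'
  · have he : Icc (max j r₀) k = ∅ := Icc_eq_empty (by omega)
    simp only [he, Finset.sum_empty, div_zero]
    exact continuousOn_const

lemma deriv_nonpos {g : ℝ → ℝ} {d s₀ : ℝ} (hs₀ : 0 < s₀) (hg : HasDerivAt g d 0)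
    (hle : ∀ s ∈ Set.Icc (0 : ℝ) s₀, g s ≤ g 0) : d ≤ 0 := by
  have h1 : HasDerivWithinAt g d (Set.Ioi 0) 0 := hg.hasDerivWithinAt
  rw [hasDerivWithinAt_iff_tendsto_slope,
    Set.diff_singleton_eq_self (by simp : (0 : ℝ) ∉ Set.Ioi 0)] at h1
  refine le_of_tendsto h1 ?_
  filter_upwards [Ioc_mem_nhdsGT_of_mem (Set.left_mem_Ico.mpr hs₀)] with s hs
  rw [slope_def_field]
  apply div_nonpos_of_nonpos_of_nonneg
  · have := hle s ⟨hs.1.le, hs.2⟩; linarith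
  · simp [hs.1.le]

lemma hasDerivAt_Ff (a v : ℕ → ℝ)
    (ha : ∀ p ∈ Icc r₀ k, δ p ≠ 0 → a p ≠ 0)
    (hS : ∀ j ∈ Icc 1 k, Sf k r₀ t a j ≠ 0) :
    HasDerivAt (fun s => Ff k r₀ t δ (fun q => a q + s * v q))
      ((∑ p ∈ Icc r₀ k, δ p * v p / a p)
        + ∑ j ∈ Icc 1 k, (1 - δ j) * ((∑ q ∈ Icc (max j r₀) k, v q / t q) / Sf k r₀ t a j)) 0 := by
  simp only [Ff, Sf]
  apply HasDerivAt.add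
  · apply HasDerivAt.fun_sum
    intro p hp
    by_cases hd : δ p = 0
    · simp only [hd, zero_mul, zero_div]
      exact hasDerivAt_const 0 0
    · have hap : a p + 0 * v p ≠ 0 := by simpa using ha p hp hd
      have h := (((hasDerivAt_mul_const (v p)).const_add (a p)).log hap).const_mul (δ p)
      simpa [mul_div_assoc] using h
  · apply HasDerivAt.fun_sum
    intro j hj
    have hSj : (∑ q ∈ Icc (max j r₀) k, (a q + 0 * v q) / t q) ≠ 0 := by
      simp only [zero_mul, add_zero]
      exact hS j hj
    have hsum : HasDerivAt (fun s => ∑ q ∈ Icc (max j r₀) k, (a q + s * v q) / t q)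
        (∑ q ∈ Icc (max j r₀) k, v q / t q) 0 :=
      HasDerivAt.fun_sum fun q _ => ((hasDerivAt_mul_const (v q)).const_add (a q)).div_const (t q)
    have h := (hsum.log hSj).const_mul (1 - δ j)
    simpa using h

lemma kkt (hr₀ : 1 ≤ r₀) (hrk : r₀ ≤ k) (ht : ∀ i ∈ Icc 1 k, 0 < t i)
    {ε : ℝ} (hε : 0 < ε) {a : ℕ → ℝ}
    (haK : a ∈ Kset k r₀ δ ε) (hmax : IsMaxOn (Ff k r₀ t δ) (Kset k r₀ δ ε) a)
    (hbd : ∀ p ∈ Icc r₀ k, wf k δ p ≠ 0 → ε < a p)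
    {i l : ℕ} (hiI : i ∈ Icc r₀ k) (hlI : l ∈ Icc r₀ k) (hia : ε * wf k δ i < a i) :
    δ l / a l + Cf k r₀ t δ a l / t l ≤ δ i / a i + Cf k r₀ t δ a i / t i := by
  by_cases hil : i = l
  · subst hil; exact le_refl _
  obtain ⟨hsupp, hlow, hsum⟩ := haK
  obtain ⟨hi1, hi2⟩ := mem_Icc.mp hiI
  obtain ⟨hl1, hl2⟩ := mem_Icc.mp hlI
  have hnn : ∀ q ∈ Icc r₀ k, 0 ≤ a q := fun q hq =>
    le_trans (mul_nonneg hε.le (wf_nonneg k δ q)) (hlow q hq)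
  have hak : ε < a k := hbd k (mem_Icc.mpr ⟨hrk, le_refl k⟩) (by rw [wf_k]; norm_num)
  have hakpos : 0 < a k := hε.trans hak
  have hS : ∀ j ∈ Icc 1 k, Sf k r₀ t a j ≠ 0 := fun j hj =>
    (Sf_pos hr₀ hrk ht hnn hakpos (mem_Icc.mp hj).2).ne'
  have ha' : ∀ p ∈ Icc r₀ k, δ p ≠ 0 → a p ≠ 0 := fun p hp hd =>
    (hε.trans (hbd p hp (by rw [wf_of_delta _ _ hd]; norm_num))).ne'
  have hli : l ≠ i := fun h => hil h.symm
  set v : ℕ → ℝ := fun q => (if q = l then (1 : ℝ) else 0) - (if q = i then 1 else 0) with hv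
  have hvl : v l = 1 := by simp [hv, hli]
  have hvi : v i = -1 := by simp [hv, hil]
  have hv0 : ∀ q, q ≠ l → q ≠ i → v q = 0 := fun q h1 h2 => by simp [hv, h1, h2]
  have hd := hasDerivAt_Ff a v ha' hS
  set s₀ := a i - ε * wf k δ i with hs₀def
  have hs₀ : 0 < s₀ := by rw [hs₀def]; linarith
  have hmem : ∀ s ∈ Set.Icc (0 : ℝ) s₀, (fun q => a q + s * v q) ∈ Kset k r₀ δ ε := by
    intro s hs
    obtain ⟨hs0, hss⟩ := hs
    refine ⟨?_, ?_, ?_⟩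
    · intro q hq
      have h1 : q ≠ l := fun h => hq (h ▸ hlI)
      have h2 : q ≠ i := fun h => hq (h ▸ hiI)
      show a q + s * v q = 0
      rw [hv0 q h1 h2, mul_zero, add_zero]
      exact hsupp q hq
    · intro q hq
      show ε * wf k δ q ≤ a q + s * v q
      by_cases h1 : q = l
      · subst h1
        rw [hvl, mul_one]
        have := hlow q hq
        linarith
      · by_cases h2 : q = i
        · subst h2
          rw [hvi]
          have : ε * wf k δ q = a q - s₀ := by rw [hs₀def]; ring
          rw [this]
          linarith
        · rw [hv0 q h1 h2, mul_zero, add_zero]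
          exact hlow q hq
    · have h3 : ∑ q ∈ Icc r₀ k, (a q + s * v q)
          = (∑ q ∈ Icc r₀ k, a q) + s * ∑ q ∈ Icc r₀ k, v q := by
        rw [Finset.sum_add_distrib, Finset.mul_sum]
      have hvsum : ∑ q ∈ Icc r₀ k, v q = 0 := by
        rw [hv]
        rw [Finset.sum_sub_distrib, Finset.sum_ite_eq', Finset.sum_ite_eq',
          if_pos hlI, if_pos hiI, sub_self]
      show ∑ q ∈ Icc r₀ k, (a q + s * v q) = 1
      rw [h3, hvsum, hsum, mul_zero, add_zero]
  -- the derivative equals the difference of the two score expressions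
  have e1 : ∑ p ∈ Icc r₀ k, δ p * v p / a p = δ l / a l - δ i / a i := by
    have h : ∀ p ∈ Icc r₀ k, δ p * v p / a p
        = (if p = l then δ p / a p else 0) - (if p = i then δ p / a p else 0) := by
      intro p _
      by_cases h1 : p = l
      · subst h1
        rw [if_pos rfl, if_neg (fun h : p = i => hil h.symm), hvl]
        ring
      · by_cases h2 : p = i
        · subst h2
          rw [if_neg h1, if_pos rfl, hvi]
          ring
        · rw [hv0 p h1 h2, if_neg h1, if_neg h2]
          ring
    rw [Finset.sum_congr rfl h, Finset.sum_sub_distrib, Finset.sum_ite_eq',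
      Finset.sum_ite_eq', if_pos hlI, if_pos hiI]
  have e2 : ∀ j ∈ Icc 1 k, ∑ q ∈ Icc (max j r₀) k, v q / t q
      = (if j ≤ l then 1 / t l else 0) - (if j ≤ i then 1 / t i else 0) := by
    intro j hj
    have h : ∀ q ∈ Icc (max j r₀) k, v q / t q
        = (if q = l then 1 / t l else 0) - (if q = i then 1 / t i else 0) := by
      intro q _
      by_cases h1 : q = l
      · subst h1
        rw [if_pos rfl, if_neg (fun h : q = i => hil h.symm), hvl]
        ring
      · by_cases h2 : q = i
        · subst h2
          rw [if_neg h1, if_pos rfl, hvi]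
          ring
        · rw [hv0 q h1 h2, if_neg h1, if_neg h2]
          ring
    rw [Finset.sum_congr rfl h, Finset.sum_sub_distrib, Finset.sum_ite_eq',
      Finset.sum_ite_eq']
    congr 1
    · exact if_congr (by rw [mem_Icc]; omega) rfl rfl
    · exact if_congr (by rw [mem_Icc]; omega) rfl rfl
  have e3 : ∑ j ∈ Icc 1 k, (1 - δ j) * ((∑ q ∈ Icc (max j r₀) k, v q / t q) / Sf k r₀ t a j)
      = Cf k r₀ t δ a l / t l - Cf k r₀ t δ a i / t i := by
    have split : ∀ j ∈ Icc 1 k,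
        (1 - δ j) * ((∑ q ∈ Icc (max j r₀) k, v q / t q) / Sf k r₀ t a j)
        = (if j ≤ l then ((1 - δ j) / Sf k r₀ t a j) / t l else 0)
          - (if j ≤ i then ((1 - δ j) / Sf k r₀ t a j) / t i else 0) := by
      intro j hj
      rw [e2 j hj]
      split_ifs <;> ring
    rw [Finset.sum_congr rfl split, Finset.sum_sub_distrib]
    congr 1
    · rw [← Finset.sum_filter]
      have hf : filter (fun j => j ≤ l) (Icc 1 k) = Icc 1 l := by
        ext j; simp only [mem_Icc, mem_filter]; omega
      rw [hf, ← Finset.sum_div]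
      rfl
    · rw [← Finset.sum_filter]
      have hf : filter (fun j => j ≤ i) (Icc 1 k) = Icc 1 i := by
        ext j; simp only [mem_Icc, mem_filter]; omega
      rw [hf, ← Finset.sum_div]
      rfl
  have h0fun : (fun q => a q + (0 : ℝ) * v q) = a := by funext q; simp
  have hle : ∀ s ∈ Set.Icc (0 : ℝ) s₀,
      (fun s => Ff k r₀ t δ (fun q => a q + s * v q)) s
        ≤ (fun s => Ff k r₀ t δ (fun q => a q + s * v q)) 0 := by
    intro s hs
    simp only
    rw [h0fun]
    exact isMaxOn_iff.mp hmax _ (hmem s hs)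
  have hd0 := deriv_nonpos hs₀ hd hle
  rw [e1, e3] at hd0
  linarith

lemma Kset_subset_pi {ε : ℝ} (hε : 0 ≤ ε) :
    Kset k r₀ δ ε ⊆ Set.pi Set.univ (fun _ : ℕ => Set.Icc (0 : ℝ) 1) := by
  rintro a ⟨hsupp, hlow, hsum⟩ q _
  by_cases hq : q ∈ Icc r₀ k
  · constructor
    · exact le_trans (mul_nonneg hε (wf_nonneg k δ q)) (hlow q hq)
    · have h := Finset.single_le_sum (f := fun p => a p)
        (fun p hp => le_trans (mul_nonneg hε (wf_nonneg k δ p)) (hlow p hp)) hq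
      rw [hsum] at h
      exact h
  · rw [hsupp q hq]
    exact ⟨le_refl 0, zero_le_one⟩

lemma Kset_isClosed {ε : ℝ} : IsClosed (Kset k r₀ δ ε) := by
  have c1 : IsClosed {a : ℕ → ℝ | ∀ q, q ∉ Icc r₀ k → a q = 0} := by
    have he : {a : ℕ → ℝ | ∀ q, q ∉ Icc r₀ k → a q = 0}
        = ⋂ (q : ℕ) (_ : q ∉ Icc r₀ k), {a : ℕ → ℝ | a q = 0} := by
      ext a; simp
    rw [he]
    exact isClosed_iInter fun q => isClosed_iInter fun _ =>
      isClosed_eq (continuous_apply q) continuous_const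
  have c2 : IsClosed {a : ℕ → ℝ | ∀ q ∈ Icc r₀ k, ε * wf k δ q ≤ a q} := by
    have he : {a : ℕ → ℝ | ∀ q ∈ Icc r₀ k, ε * wf k δ q ≤ a q}
        = ⋂ q ∈ Icc r₀ k, {a : ℕ → ℝ | ε * wf k δ q ≤ a q} := by
      ext a; simp
    rw [he]
    exact isClosed_biInter fun q _ => isClosed_le continuous_const (continuous_apply q)
  have c3 : IsClosed {a : ℕ → ℝ | ∑ q ∈ Icc r₀ k, a q = 1} :=
    isClosed_eq (continuous_finset_sum _ fun q _ => continuous_apply q) continuous_const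
  exact c1.inter (c2.inter c3)

lemma Ff_contOn (hr₀ : 1 ≤ r₀) (hrk : r₀ ≤ k) (ht : ∀ i ∈ Icc 1 k, 0 < t i)
    {ε : ℝ} (hε : 0 < ε) : ContinuousOn (Ff k r₀ t δ) (Kset k r₀ δ ε) := by
  have hnn : ∀ a ∈ Kset k r₀ δ ε, ∀ q ∈ Icc r₀ k, 0 ≤ a q := fun a ha q hq =>
    le_trans (mul_nonneg hε.le (wf_nonneg k δ q)) (ha.2.1 q hq)
  have hakpos : ∀ a ∈ Kset k r₀ δ ε, 0 < a k := by
    intro a ha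
    have h := ha.2.1 k (mem_Icc.mpr ⟨hrk, le_refl k⟩)
    rw [wf_k, mul_one] at h
    exact hε.trans_le h
  show ContinuousOn (fun a => (∑ p ∈ Icc r₀ k, δ p * Real.log (a p))
    + ∑ j ∈ Icc 1 k, (1 - δ j) * Real.log (Sf k r₀ t a j)) (Kset k r₀ δ ε)
  apply ContinuousOn.add
  · apply continuousOn_finset_sum
    intro p hp
    by_cases hd : δ p = 0
    · simp only [hd, zero_mul]
      exact continuousOn_const
    · apply ContinuousOn.mul continuousOn_const
      apply ContinuousOn.log ((continuous_apply p).continuousOn)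
      intro a ha
      have h := ha.2.1 p hp
      rw [wf_of_delta _ _ hd, mul_one] at h
      exact (hε.trans_le h).ne'
  · apply continuousOn_finset_sum
    intro j hj
    apply ContinuousOn.mul continuousOn_const
    apply ContinuousOn.log
    · exact continuousOn_finset_sum _ fun q _ => ((continuous_apply q).continuousOn).div_const _
    · intro a ha
      exact (Sf_pos hr₀ hrk ht (hnn a ha) (hakpos a ha) (mem_Icc.mp hj).2).ne'

lemma Ff_le_of_boundary (hr₀ : 1 ≤ r₀) (hrk : r₀ ≤ k) (ht : ∀ i ∈ Icc 1 k, 0 < t i)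
    (hδ01 : ∀ i, δ i = 0 ∨ δ i = 1) {ε : ℝ} (hε : 0 < ε) {a : ℕ → ℝ}
    (haK : a ∈ Kset k r₀ δ ε) {p : ℕ} (hp : p ∈ Icc r₀ k) (hw : wf k δ p ≠ 0)
    (hap : a p ≤ ε) :
    Ff k r₀ t δ a ≤ Real.log ε
      + ((k : ℝ) * max (Real.log (∑ q ∈ Icc 1 k, 1 / t q)) 0 + |Real.log (t k)|) := by
  obtain ⟨hsupp, hlow, hsum⟩ := haK
  have hk1 : 1 ≤ k := hr₀.trans hrk
  have htk : 0 < t k := ht k (mem_Icc.mpr ⟨hk1, le_refl k⟩)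
  have hnn : ∀ q ∈ Icc r₀ k, 0 ≤ a q := fun q hq =>
    le_trans (mul_nonneg hε.le (wf_nonneg k δ q)) (hlow q hq)
  have hle1 : ∀ q ∈ Icc r₀ k, a q ≤ 1 := by
    intro q hq
    have h := Finset.single_le_sum (f := fun p => a p) hnn hq
    rw [hsum] at h
    exact h
  have hape : a p = ε := by
    refine le_antisymm hap ?_
    have h := hlow p hp
    rwa [wf_eq_one _ _ hw, mul_one] at h
  have hakpos : 0 < a k := by
    have h := hlow k (mem_Icc.mpr ⟨hrk, le_refl k⟩)
    rw [wf_k, mul_one] at h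
    exact hε.trans_le h
  set B := ∑ q ∈ Icc 1 k, 1 / t q with hB
  set M := max (Real.log B) 0 with hM
  have hM0 : 0 ≤ M := le_max_right _ _
  have hSB : ∀ j : ℕ, Sf k r₀ t a j ≤ B := by
    intro j
    calc Sf k r₀ t a j ≤ ∑ q ∈ Icc (max j r₀) k, 1 / t q := by
          apply Finset.sum_le_sum
          intro q hq
          rw [mem_Icc] at hq
          have htq : 0 < t q := ht q (mem_Icc.mpr ⟨by omega, hq.2⟩)
          exact (div_le_div_iff_of_pos_right htq).mpr (hle1 q (mem_Icc.mpr ⟨by omega, hq.2⟩))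
      _ ≤ B := by
          apply Finset.sum_le_sum_of_subset_of_nonneg
          · intro q hq
            rw [mem_Icc] at hq ⊢
            omega
          · intro q hq _
            have htq : 0 < t q := ht q hq
            positivity
  have hlogS : ∀ j ∈ Icc 1 k, (1 - δ j) * Real.log (Sf k r₀ t a j) ≤ M := by
    intro j hj
    rcases hδ01 j with h | h
    · rw [h, sub_zero, one_mul]
      exact le_trans (Real.log_le_log (Sf_pos hr₀ hrk ht hnn hakpos (mem_Icc.mp hj).2) (hSB j))
        (le_max_left _ _)
    · rw [h, sub_self, zero_mul]
      exact hM0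
  have hlogA : ∀ q ∈ Icc r₀ k, δ q * Real.log (a q) ≤ 0 := by
    intro q hq
    rcases hδ01 q with h | h
    · rw [h, zero_mul]
    · rw [h, one_mul]
      exact Real.log_nonpos (hnn q hq) (hle1 q hq)
  have hcard1k : (Icc 1 k).card = k := by rw [Nat.card_Icc]; omega
  show (∑ q ∈ Icc r₀ k, δ q * Real.log (a q))
      + (∑ j ∈ Icc 1 k, (1 - δ j) * Real.log (Sf k r₀ t a j))
    ≤ Real.log ε + ((k : ℝ) * M + |Real.log (t k)|)
  by_cases hdp : δ p = 0
  · -- then p = k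
    have hpk : p = k := by
      by_contra h
      exact hw (by simp [wf, hdp, h])
    subst hpk
    have h1 : ∑ q ∈ Icc r₀ p, δ q * Real.log (a q) ≤ 0 := Finset.sum_nonpos hlogA
    have hkI : p ∈ Icc 1 p := mem_Icc.mpr ⟨hk1, le_refl p⟩
    have h2 : (1 - δ p) * Real.log (Sf p r₀ t a p)
        + ∑ j ∈ (Icc 1 p).erase p, (1 - δ j) * Real.log (Sf p r₀ t a j)
        = ∑ j ∈ Icc 1 p, (1 - δ j) * Real.log (Sf p r₀ t a j) :=
      Finset.add_sum_erase _ (fun j => (1 - δ j) * Real.log (Sf p r₀ t a j)) hkI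
    have hSk : Sf p r₀ t a p = a p / t p := by
      unfold Sf
      rw [max_eq_left hrk, Finset.Icc_self, Finset.sum_singleton]
    have h3 : (1 - δ p) * Real.log (Sf p r₀ t a p) = Real.log ε - Real.log (t p) := by
      rw [hdp, sub_zero, one_mul, hSk, hape, Real.log_div hε.ne' htk.ne']
    have h4 : ∑ j ∈ (Icc 1 p).erase p, (1 - δ j) * Real.log (Sf p r₀ t a j)
        ≤ (p : ℝ) * M := by
      calc ∑ j ∈ (Icc 1 p).erase p, (1 - δ j) * Real.log (Sf p r₀ t a j)
          ≤ ∑ j ∈ (Icc 1 p).erase p, M :=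
            Finset.sum_le_sum fun j hj => hlogS j (mem_of_mem_erase hj)
        _ = (((Icc 1 p).erase p).card : ℝ) * M := by rw [Finset.sum_const, nsmul_eq_mul]
        _ ≤ (p : ℝ) * M := by
            apply mul_le_mul_of_nonneg_right _ hM0
            rw [Finset.card_erase_of_mem hkI, hcard1k]
            exact_mod_cast Nat.sub_le p 1
    linarith [neg_abs_le (Real.log (t p)), le_abs_self (Real.log (t p))]
  · have hdp1 : δ p = 1 := (hδ01 p).resolve_left hdp
    have h1 : ∑ q ∈ Icc r₀ k, δ q * Real.log (a q) ≤ Real.log ε := by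
      rw [← Finset.add_sum_erase _ _ hp]
      have he : δ p * Real.log (a p) = Real.log ε := by rw [hdp1, one_mul, hape]
      have h2 : ∑ q ∈ (Icc r₀ k).erase p, δ q * Real.log (a q) ≤ 0 :=
        Finset.sum_nonpos fun q hq => hlogA q (mem_of_mem_erase hq)
      rw [he]
      linarith
    have h2 : ∑ j ∈ Icc 1 k, (1 - δ j) * Real.log (Sf k r₀ t a j) ≤ (k : ℝ) * M := by
      calc ∑ j ∈ Icc 1 k, (1 - δ j) * Real.log (Sf k r₀ t a j)
          ≤ ∑ j ∈ Icc 1 k, M := Finset.sum_le_sum hlogS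
        _ = ((Icc 1 k).card : ℝ) * M := by rw [Finset.sum_const, nsmul_eq_mul]
        _ = (k : ℝ) * M := by rw [hcard1k]
    have h3 : (0:ℝ) ≤ |Real.log (t k)| := abs_nonneg _
    linarith

lemma exists_fixed (hr₀ : 1 ≤ r₀) (hrk : r₀ ≤ k) (ht : ∀ i ∈ Icc 1 k, 0 < t i)
    (hδ01 : ∀ i, δ i = 0 ∨ δ i = 1) {m : ℕ}
    (hδm : ∑ i ∈ Icc 1 k, δ i = (m : ℝ))
    (hδr : ∀ i, 1 ≤ i → i < r₀ → δ i = 0) :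
    ∃ a ∈ Dset k r₀, ∀ i ∈ Icc r₀ k, phiMap k r₀ t δ a i = a i := by
  have hk1 : 1 ≤ k := hr₀.trans hrk
  have hkR : (0 : ℝ) < (k : ℝ) := by exact_mod_cast Nat.pos_of_ne_zero (by omega)
  have hk0 : (k : ℝ) ≠ 0 := hkR.ne'
  set n := k - r₀ + 1 with hn
  have hnR : (0 : ℝ) < (n : ℝ) := by exact_mod_cast (by omega : 0 < n)
  set a0 : ℕ → ℝ := fun q => if q ∈ Icc r₀ k then ((n : ℝ))⁻¹ else 0 with ha0def
  set C0 := (k : ℝ) * max (Real.log (∑ q ∈ Icc 1 k, 1 / t q)) 0 + |Real.log (t k)| with hC0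
  set ε := min ((2 * (k : ℝ))⁻¹) (Real.exp (Ff k r₀ t δ a0 - C0 - 1)) with hεdef
  have hε : 0 < ε := lt_min (by positivity) (Real.exp_pos _)
  have hcard : (Icc r₀ k).card = n := by rw [Nat.card_Icc]; omega
  have ha0K : a0 ∈ Kset k r₀ δ ε := by
    refine ⟨fun q hq => if_neg hq, ?_, ?_⟩
    · intro q hq
      have h1 : ε * wf k δ q ≤ ε := mul_le_of_le_one_right hε.le (wf_le_one k δ q)
      have h2 : ε ≤ (2 * (k : ℝ))⁻¹ := min_le_left _ _
      have h3 : (2 * (k : ℝ))⁻¹ ≤ (n : ℝ)⁻¹ := by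
        apply inv_anti₀ hnR
        exact_mod_cast (by omega : n ≤ 2 * k)
      have h4 : a0 q = (n : ℝ)⁻¹ := if_pos hq
      rw [h4]
      linarith
    · have h : ∀ q ∈ Icc r₀ k, a0 q = (n : ℝ)⁻¹ := fun q hq => if_pos hq
      rw [Finset.sum_congr rfl h, Finset.sum_const, hcard, nsmul_eq_mul,
        mul_inv_cancel₀ hnR.ne']
  have hcomp : IsCompact (Kset k r₀ δ ε) :=
    (isCompact_univ_pi fun _ => isCompact_Icc).of_isClosed_subset Kset_isClosed
      (Kset_subset_pi hε.le)
  obtain ⟨A, hAK, hAmax⟩ := hcomp.exists_isMaxOn ⟨a0, ha0K⟩ (Ff_contOn hr₀ hrk ht hε)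
  have hεlog : Real.log ε ≤ Ff k r₀ t δ a0 - C0 - 1 := by
    calc Real.log ε ≤ Real.log (Real.exp (Ff k r₀ t δ a0 - C0 - 1)) :=
          Real.log_le_log hε (min_le_right _ _)
      _ = _ := Real.log_exp _
  have hbd : ∀ p ∈ Icc r₀ k, wf k δ p ≠ 0 → ε < A p := by
    intro p hp hw
    rcases lt_or_ge ε (A p) with h | h
    · exact h
    · exfalso
      have h1 := Ff_le_of_boundary hr₀ hrk ht hδ01 hε hAK hp hw h
      have h2 : Ff k r₀ t δ a0 ≤ Ff k r₀ t δ A := isMaxOn_iff.mp hAmax a0 ha0K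
      rw [← hC0] at h1
      linarith
  obtain ⟨hAsupp, hAlow, hAsum⟩ := hAK
  have hAnn : ∀ q ∈ Icc r₀ k, 0 ≤ A q := fun q hq =>
    le_trans (mul_nonneg hε.le (wf_nonneg k δ q)) (hAlow q hq)
  have hkI : k ∈ Icc r₀ k := mem_Icc.mpr ⟨hrk, le_refl k⟩
  have hAk : ε < A k := hbd k hkI (by rw [wf_k]; norm_num)
  have hAkpos : 0 < A k := hε.trans hAk
  have hS : ∀ j ∈ Icc 1 k, Sf k r₀ t A j ≠ 0 := fun j hj =>
    (Sf_pos hr₀ hrk ht hAnn hAkpos (mem_Icc.mp hj).2).ne'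
  have hδ0ofA : ∀ i ∈ Icc r₀ k, A i = 0 → δ i = 0 := by
    intro i hi h0
    by_contra hd
    have h := hbd i hi (by rw [wf_of_delta _ _ hd]; norm_num)
    rw [h0] at h
    linarith
  have hKmem : A ∈ Kset k r₀ δ ε := ⟨hAsupp, hAlow, hAsum⟩
  have hslack : ∀ i ∈ Icc r₀ k, 0 < A i → ε * wf k δ i < A i := by
    intro i hi h0
    by_cases hw : wf k δ i = 0
    · rw [hw, mul_zero]; exact h0
    · rw [wf_eq_one _ _ hw, mul_one]; exact hbd i hi hw
  have hDeq : ∀ i ∈ Icc r₀ k, 0 < A i →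
      δ i / A i + Cf k r₀ t δ A i / t i = δ k / A k + Cf k r₀ t δ A k / t k := by
    intro i hi h0
    have h1 := kkt hr₀ hrk ht hε hKmem hAmax hbd hi hkI (hslack i hi h0)
    have h2 := kkt hr₀ hrk ht hε hKmem hAmax hbd hkI hi (hslack k hkI hAkpos)
    exact le_antisymm h2 h1
  have hsum1 : ∑ i ∈ Icc r₀ k, A i * (δ i / A i + Cf k r₀ t δ A i / t i)
      = δ k / A k + Cf k r₀ t δ A k / t k := by
    have h : ∀ i ∈ Icc r₀ k, A i * (δ i / A i + Cf k r₀ t δ A i / t i)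
        = A i * (δ k / A k + Cf k r₀ t δ A k / t k) := by
      intro i hi
      rcases (hAnn i hi).eq_or_lt with h0 | h0
      · rw [← h0, zero_mul, zero_mul]
      · rw [hDeq i hi h0]
    rw [Finset.sum_congr rfl h, ← Finset.sum_mul, hAsum, one_mul]
  have hsum2 : ∑ i ∈ Icc r₀ k, A i * (δ i / A i + Cf k r₀ t δ A i / t i)
      = (m : ℝ) + ((k : ℝ) - (m : ℝ)) := by
    have h : ∀ i ∈ Icc r₀ k, A i * (δ i / A i + Cf k r₀ t δ A i / t i)
        = δ i + A i / t i * Cf k r₀ t δ A i := by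
      intro i hi
      rcases (hAnn i hi).eq_or_lt with h0 | h0
      · rw [← h0, hδ0ofA i hi h0.symm]
        simp
      · have h4 : δ i / A i * A i = δ i := div_mul_cancel₀ _ h0.ne'
        linear_combination h4
    rw [Finset.sum_congr rfl h, Finset.sum_add_distrib, sum_delta_Icc hr₀ hrk hδm hδr,
      sum_weighted hS, sum_one_sub_delta hr₀ hrk hδm]
  have hlamk : δ k / A k + Cf k r₀ t δ A k / t k = (k : ℝ) := by
    rw [← hsum1, hsum2]; ring
  have hfix : ∀ i ∈ Icc r₀ k, phiMap k r₀ t δ A i = A i := by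
    intro i hi
    rcases (hAnn i hi).eq_or_lt with h0 | h0
    · rw [phi_eq, hδ0ofA i hi h0.symm, ← h0]
      simp
    · have hDk : δ i / A i + Cf k r₀ t δ A i / t i = (k : ℝ) :=
        (hDeq i hi h0).trans hlamk
      have h4 : (δ i / A i + Cf k r₀ t δ A i / t i) * A i = (k : ℝ) * A i := by
        rw [hDk]
      have h5 : δ i / A i * A i = δ i := div_mul_cancel₀ _ h0.ne'
      have h3 : δ i + A i / t i * Cf k r₀ t δ A i = (k : ℝ) * A i := by
        linear_combination h4 - h5
      rw [phi_eq, h3, one_div, inv_mul_cancel_left₀ hk0]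
  have hAkge : 1 / (k : ℝ) ≤ A k := by
    rw [← hfix k hkI]
    exact phi_k_ge hr₀ hrk ht hδ01 hAnn hAkpos
  exact ⟨A, ⟨hAnn, hAsum, hAkge⟩, hfix⟩

end PhiFix

/-- `φ` is a continuous self-map of `D`, and hence has a fixed point in `D`. -/
theorem phi_selfmap_and_fixed_point
    (k r₀ m : ℕ) (hr₀ : 1 ≤ r₀) (hrk : r₀ ≤ k)
    (t : ℕ → ℝ) (ht_pos : ∀ i ∈ Finset.Icc 1 k, 0 < t i)
    (ht_mono : StrictMonoOn t (Set.Icc 1 k))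
    (δ : ℕ → ℝ) (hδ : ∀ i, δ i = 0 ∨ δ i = 1)
    (hδm : ∑ i ∈ Finset.Icc 1 k, δ i = (m : ℝ))
    (hδr : ∀ i, 1 ≤ i → i < r₀ → δ i = 0) :
    ContinuousOn (phiMap k r₀ t δ) (Dset k r₀) ∧
    Set.MapsTo (phiMap k r₀ t δ) (Dset k r₀) (Dset k r₀) ∧
    ∃ a ∈ Dset k r₀, ∀ i ∈ Finset.Icc r₀ k, phiMap k r₀ t δ a i = a i :=
  ⟨PhiFix.contOn hr₀ hrk ht_pos,
   PhiFix.mapsTo hr₀ hrk ht_pos hδ hδm hδr,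
   PhiFix.exists_fixed hr₀ hrk ht_pos hδ hδm hδr⟩
end
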